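/- Let {aₙ} satisfy the Heisenberg relations [aₘ, aₙ] = m δ_{m+n,0} on V, with associated Virasoro modes Lₙ (canonical construction, central charge 1). For any η, κ ∈ ℂ, the operators L̃ₙ := Lₙ - iκn·aₙ + η·aₙ for n ≠ 0 and L̃₀ := L₀ + η·a₀ + (κ² + η²)/2 satisfy the Virasoro relations [L̃ₘ, L̃ₙ] = (m-n)L̃_{m+n} + (c/12)m(m²-1)δ_{m+n,0} with central charge c = 1 + 12κ². -/
import Mathlib


/-- Given a Heisenberg field {aₙ} and its canonical Virasoro modes {Lₙ} (central charge 1,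
[Lₙ,aₘ] = -m·a_{n+m}), for any η, κ ∈ ℂ the operators L̃ₙ = Lₙ - iκn·aₙ + η·aₙ (n ≠ 0) and
L̃₀ = L₀ + η·a₀ + (κ²+η²)/2 satisfy the Virasoro relations with central charge 1 + 12κ². -/
theorem stmt_14 {V : Type*} [AddCommGroup V] [Module ℂ V]
    (a : ℤ → V →ₗ[ℂ] V)
    (hheis : ∀ m n : ℤ, a m ∘ₗ a n - a n ∘ₗ a m
      = (if m + n = 0 then (m : ℂ) else 0) • LinearMap.id)
    (L : ℤ → V →ₗ[ℂ] V)
    (hvir : ∀ m n : ℤ, L m ∘ₗ L n - L n ∘ₗ L m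
      = ((m : ℂ) - (n : ℂ)) • L (m + n)
        + (if m + n = 0 then (1 : ℂ) / 12 * (m : ℂ) * ((m : ℂ) ^ 2 - 1) else 0)
          • LinearMap.id)
    (hLa : ∀ m n : ℤ, L n ∘ₗ a m - a m ∘ₗ L n = (-(m : ℂ)) • a (n + m))
    (η κ : ℂ) (Lt : ℤ → V →ₗ[ℂ] V)
    (hLt0 : Lt 0 = L 0 + η • a 0 + ((κ ^ 2 + η ^ 2) / 2) • LinearMap.id)
    (hLtn : ∀ n : ℤ, n ≠ 0 →
      Lt n = L n + (-(Complex.I) * κ * (n : ℂ)) • a n + η • a n) :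
    ∀ m n : ℤ, Lt m ∘ₗ Lt n - Lt n ∘ₗ Lt m
      = ((m : ℂ) - (n : ℂ)) • Lt (m + n)
        + (if m + n = 0 then (1 + 12 * κ ^ 2) / 12 * (m : ℂ) * ((m : ℂ) ^ 2 - 1) else 0)
          • LinearMap.id := by
  have hLt : ∀ k : ℤ, Lt k = L k + (-(Complex.I) * κ * (k : ℂ) + η) • a k
      + (if k = 0 then (κ ^ 2 + η ^ 2) / 2 else 0) • (LinearMap.id : V →ₗ[ℂ] V) := by
    intro k
    by_cases hk : k = 0
    · subst hk
      rw [hLt0]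
      norm_num
    · rw [hLtn k hk]
      simp only [hk, if_neg hk, if_false, zero_smul, add_zero, add_smul]
      abel
  intro m n
  have e1 := hvir m n
  have e2 := hLa n m   -- L m ∘ a n - a n ∘ L m = -n • a (m+n)
  have e3 : L n ∘ₗ a m - a m ∘ₗ L n = (-(m : ℂ)) • a (m + n) := by
    rw [add_comm m n]; exact hLa m n
  have e4 := hheis m n
  have r1 : L n ∘ₗ L m = L m ∘ₗ L n - (((m : ℂ) - n) • L (m + n)
      + (if m + n = 0 then (1 : ℂ) / 12 * (m : ℂ) * ((m : ℂ) ^ 2 - 1) else 0)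
        • (LinearMap.id : V →ₗ[ℂ] V)) := by rw [← e1]; abel
  have r2 : a n ∘ₗ L m = L m ∘ₗ a n - (-(n : ℂ)) • a (m + n) := by rw [← e2]; abel
  have r3 : a m ∘ₗ L n = L n ∘ₗ a m - (-(m : ℂ)) • a (m + n) := by rw [← e3]; abel
  have r4 : a n ∘ₗ a m = a m ∘ₗ a n
      - (if m + n = 0 then (m : ℂ) else 0) • (LinearMap.id : V →ₗ[ℂ] V) := by
    rw [← e4]; abel
  rw [hLt m, hLt n, hLt (m + n)]
  by_cases h : m + n = 0
  · have hn : n = -m := by omega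
    subst hn
    simp only [add_neg_cancel, if_pos rfl, Int.cast_neg, if_pos] at *
    simp only [LinearMap.add_comp, LinearMap.comp_add, LinearMap.smul_comp, LinearMap.comp_smul, LinearMap.id_comp,
      LinearMap.comp_id, smul_smul] at *
    rw [r1, r2, r3, r4]
    match_scalars <;> (first | ring1 | (ring_nf; simp only [Complex.I_sq]; ring1))
  · have hm0 : ¬ (m = 0 ∧ n = 0) := by omega
    simp only [if_neg h] at *
    simp only [LinearMap.add_comp, LinearMap.comp_add, LinearMap.smul_comp, LinearMap.comp_smul, LinearMap.id_comp,
      LinearMap.comp_id, smul_smul] at *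
    rw [r1, r2, r3, r4]
    by_cases hm : m = 0
    · have hn : n ≠ 0 := by omega
      simp only [hm, if_pos rfl, if_neg hn, Int.cast_zero] at *
      module
    · by_cases hn : n = 0
      · simp only [hn, if_pos rfl, if_neg hm, Int.cast_zero] at *
        module
      · simp only [if_neg hm, if_neg hn, zero_smul, smul_zero, add_zero, zero_add] at *
        module
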